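/- In the triangular lattice graph E, let a ≥ b ≥ 0 be integers. A vertex (x,y) ∈ ℤ × ℤ lies on some geodesic from (0,0) to (a,b), i.e. satisfies dist_E((0,0),(x,y)) + dist_E((x,y),(a,b)) = dist_E((0,0),(a,b)), if and only if 0 ≤ y ≤ b and y ≤ x ≤ a − b + y. In other words, the interval between (0,0) and (a,b) in E is the (possibly degenerate) parallelogram with corners (0,0), (a−b,0), (a,b) and (b,b). -/

import Mathlib

/-- The triangular lattice graph `E`: vertex set `ℤ × ℤ`, with `u` and `v` adjacent
iff `u - v ∈ {(1,0), (-1,0), (0,1), (0,-1), (1,1), (-1,-1)}`. -/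
def triLattice : SimpleGraph (ℤ × ℤ) where
  Adj u v := (u - v) ∈ ({(1,0), (-1,0), (0,1), (0,-1), (1,1), (-1,-1)} : Set (ℤ × ℤ))
  symm := by
    constructor
    intro u v h
    simp only [Set.mem_insert_iff, Set.mem_singleton_iff, Prod.ext_iff, Prod.fst_sub,
      Prod.snd_sub] at h ⊢
    omega
  loopless := by
    constructor
    intro u h
    simp only [Set.mem_insert_iff, Set.mem_singleton_iff, Prod.ext_iff, Prod.fst_sub,
      Prod.snd_sub] at h
    omega

/-- The hexagonal-metric distance on `ℤ × ℤ`. -/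
def tdist (u v : ℤ × ℤ) : ℕ :=
  max (u.1 - v.1).natAbs (max (u.2 - v.2).natAbs ((u.1 - v.1) - (u.2 - v.2)).natAbs)

lemma tdist_mk (p q r s : ℤ) : tdist (p, q) (r, s) =
    max (p - r).natAbs (max (q - s).natAbs ((p - r) - (q - s)).natAbs) := rfl

lemma triLattice_adj_iff (u v : ℤ × ℤ) :
    triLattice.Adj u v ↔
      (u.1 - v.1 = 1 ∧ u.2 - v.2 = 0) ∨ (u.1 - v.1 = -1 ∧ u.2 - v.2 = 0) ∨
      (u.1 - v.1 = 0 ∧ u.2 - v.2 = 1) ∨ (u.1 - v.1 = 0 ∧ u.2 - v.2 = -1) ∨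
      (u.1 - v.1 = 1 ∧ u.2 - v.2 = 1) ∨ (u.1 - v.1 = -1 ∧ u.2 - v.2 = -1) := by
  show (u - v) ∈ _ ↔ _
  simp only [Set.mem_insert_iff, Set.mem_singleton_iff, Prod.ext_iff, Prod.fst_sub,
    Prod.snd_sub]

lemma triLattice_adj_step (u : ℤ × ℤ) (s t : ℤ)
    (hst : (s = 1 ∧ t = 0) ∨ (s = -1 ∧ t = 0) ∨ (s = 0 ∧ t = 1) ∨
      (s = 0 ∧ t = -1) ∨ (s = 1 ∧ t = 1) ∨ (s = -1 ∧ t = -1)) :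
    triLattice.Adj u (u.1 - s, u.2 - t) := by
  rw [triLattice_adj_iff]
  dsimp only
  omega

set_option maxHeartbeats 1600000 in
/-- One-step decrease of `tdist`, used to build geodesic walks. -/
lemma exists_step {u v : ℤ × ℤ} (h : tdist u v ≠ 0) :
    ∃ w, triLattice.Adj u w ∧ tdist w v + 1 = tdist u v := by
  have h' : ¬ (u.1 - v.1 = 0 ∧ u.2 - v.2 = 0) := by
    intro ⟨h1, h2⟩
    apply h
    simp [tdist, h1, h2]
  have key : ∃ s t : ℤ, ((s = 1 ∧ t = 0) ∨ (s = -1 ∧ t = 0) ∨ (s = 0 ∧ t = 1) ∨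
      (s = 0 ∧ t = -1) ∨ (s = 1 ∧ t = 1) ∨ (s = -1 ∧ t = -1)) ∧
      max ((u.1 - v.1) - s).natAbs (max ((u.2 - v.2) - t).natAbs
        (((u.1 - v.1) - s) - ((u.2 - v.2) - t)).natAbs) + 1 =
      max (u.1 - v.1).natAbs (max (u.2 - v.2).natAbs ((u.1 - v.1) - (u.2 - v.2)).natAbs) := by
    rcases lt_trichotomy (u.1 - v.1) 0 with h1 | h1 | h1 <;>
      rcases lt_trichotomy (u.2 - v.2) 0 with h2 | h2 | h2
    · exact ⟨-1, -1, by omega, by omega⟩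
    · exact ⟨-1, 0, by omega, by omega⟩
    · exact ⟨-1, 0, by omega, by omega⟩
    · exact ⟨0, -1, by omega, by omega⟩
    · omega
    · exact ⟨0, 1, by omega, by omega⟩
    · exact ⟨1, 0, by omega, by omega⟩
    · exact ⟨1, 0, by omega, by omega⟩
    · exact ⟨1, 1, by omega, by omega⟩
  obtain ⟨s, t, hst, heq⟩ := key
  refine ⟨(u.1 - s, u.2 - t), triLattice_adj_step u s t hst, ?_⟩
  simp only [tdist]
  have e3 : u.1 - s - v.1 = (u.1 - v.1) - s := by ring
  have e4 : u.2 - t - v.2 = (u.2 - v.2) - t := by ring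
  rw [e3, e4]
  exact heq

lemma exists_walk (n : ℕ) : ∀ u v : ℤ × ℤ, tdist u v = n →
    ∃ w : triLattice.Walk u v, w.length = n := by
  induction n with
  | zero =>
    intro u v h
    have h1 : u.1 = v.1 ∧ u.2 = v.2 := by
      simp only [tdist, Nat.max_eq_zero_iff] at h
      omega
    have : u = v := Prod.ext h1.1 h1.2
    subst this
    exact ⟨SimpleGraph.Walk.nil, rfl⟩
  | succ n ih =>
    intro u v h
    obtain ⟨w, hadj, hw⟩ := exists_step (u := u) (v := v) (by omega)
    obtain ⟨p, hp⟩ := ih w v (by omega)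
    exact ⟨SimpleGraph.Walk.cons hadj p, by simp [hp]⟩

/-- The arithmetic core of the triangle step bound. -/
lemma step_bound (A B C D : ℤ)
    (h : (A - C = 1 ∧ B - D = 0) ∨ (A - C = -1 ∧ B - D = 0) ∨ (A - C = 0 ∧ B - D = 1) ∨
      (A - C = 0 ∧ B - D = -1) ∨ (A - C = 1 ∧ B - D = 1) ∨ (A - C = -1 ∧ B - D = -1)) :
    max A.natAbs (max B.natAbs (A - B).natAbs) ≤
      max C.natAbs (max D.natAbs (C - D).natAbs) + 1 := by
  omega

lemma tdist_le_walk {u v : ℤ × ℤ} (p : triLattice.Walk u v) : tdist u v ≤ p.length := by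
  induction p with
  | nil => simp [tdist]
  | @cons u w v hadj p ih =>
    rw [triLattice_adj_iff] at hadj
    simp only [SimpleGraph.Walk.length_cons]
    have h1 : tdist u v ≤ tdist w v + 1 :=
      step_bound (u.1 - v.1) (u.2 - v.2) (w.1 - v.1) (w.2 - v.2) (by omega)
    omega

lemma triLattice_dist_eq (u v : ℤ × ℤ) : triLattice.dist u v = tdist u v := by
  obtain ⟨p, hp⟩ := exists_walk (tdist u v) u v rfl
  refine le_antisymm (hp ▸ SimpleGraph.dist_le p) ?_
  have hr : triLattice.Reachable u v := ⟨p⟩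
  obtain ⟨q, hq⟩ := hr.exists_walk_length_eq_dist
  rw [← hq]
  exact tdist_le_walk q

lemma bnd1 (x y : ℤ) : x ≤ (max ((0:ℤ)-x).natAbs (max ((0:ℤ)-y).natAbs
    (((0:ℤ)-x) - ((0:ℤ)-y)).natAbs) : ℤ) := by omega

lemma bnd2 (x y : ℤ) : y ≤ (max ((0:ℤ)-x).natAbs (max ((0:ℤ)-y).natAbs
    (((0:ℤ)-x) - ((0:ℤ)-y)).natAbs) : ℤ) := by omega

lemma bnd4 (a b x y : ℤ) : a - x ≤ (max (x-a).natAbs (max (y-b).natAbs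
    ((x-a) - (y-b)).natAbs) : ℤ) := by omega

lemma bnd5 (a b x y : ℤ) : b - y ≤ (max (x-a).natAbs (max (y-b).natAbs
    ((x-a) - (y-b)).natAbs) : ℤ) := by omega

lemma eq1 (x y : ℤ) (h1 : 0 ≤ y) (h2 : y ≤ x) : max ((0:ℤ)-x).natAbs
    (max ((0:ℤ)-y).natAbs (((0:ℤ)-x) - ((0:ℤ)-y)).natAbs) = x.toNat := by omega

lemma eq2 (a b x y : ℤ) (h1 : y ≤ b) (h2 : x ≤ a - b + y) : max (x-a).natAbs
    (max (y-b).natAbs ((x-a) - (y-b)).natAbs) = (a-x).toNat := by omega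

lemma eqC (a b : ℤ) (hb : 0 ≤ b) (hab : b ≤ a) :
    max ((0:ℤ) - a).natAbs (max ((0:ℤ) - b).natAbs (((0:ℤ) - a) - ((0:ℤ) - b)).natAbs)
      = a.toNat := by omega

set_option maxHeartbeats 1600000 in
/-- **Intervals in the triangular lattice are parallelograms.** -/
theorem triLattice_interval (a b : ℤ) (hb : 0 ≤ b) (hab : b ≤ a) (x y : ℤ) :
    triLattice.dist (0, 0) (x, y) + triLattice.dist (x, y) (a, b) =
      triLattice.dist (0, 0) (a, b) ↔
    (0 ≤ y ∧ y ≤ b ∧ y ≤ x ∧ x ≤ a - b + y) := by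
  rw [triLattice_dist_eq, triLattice_dist_eq, triLattice_dist_eq,
    tdist_mk, tdist_mk, tdist_mk, eqC a b hb hab]
  have b1 := bnd1 x y
  have b2 := bnd2 x y
  have b4 := bnd4 a b x y
  have b5 := bnd5 a b x y
  have e1 := eq1 x y
  have e2 := eq2 a b x y
  generalize hF1 : max ((0:ℤ)-x).natAbs (max ((0:ℤ)-y).natAbs
      (((0:ℤ)-x) - ((0:ℤ)-y)).natAbs) = F1 at b1 b2 e1 ⊢
  generalize hF2 : max (x-a).natAbs (max (y-b).natAbs
      ((x-a) - (y-b)).natAbs) = F2 at b4 b5 e2 ⊢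
  constructor
  · intro h
    omega
  · rintro ⟨hy0, hyb, hyx, hx⟩
    rw [e1 hy0 hyx, e2 hyb hx]
    omega
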